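/- If the pv-monoid D is associative (⊗ is associative) and ⊕-distributive, then coalescing of w_pvm-PCL formulas is associative: (ζ₁ ⊎ ζ₂) ⊎ ζ₃ ≡ ζ₁ ⊎ (ζ₂ ⊎ ζ₃). -/

import Mathlib

/-- Syntax of propositional interaction logic (PIL) over a set of ports `P`. -/
inductive PIL (P : Type) where
  | tt : PIL P
  | port : P → PIL P
  | neg : PIL P → PIL P
  | disj : PIL P → PIL P → PIL P

/-- Satisfaction of a PIL formula by an interaction (a finite set of ports). -/
def PILsat {P : Type} (α : Finset P) : PIL P → Prop
  | .tt => True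
  | .port p => p ∈ α
  | .neg φ => ¬ PILsat α φ
  | .disj φ ψ => PILsat α φ ∨ PILsat α ψ

/-- Syntax of propositional configuration logic (PCL) over ports `P`. -/
inductive PCL (P : Type) where
  | tt : PCL P
  | pil : PIL P → PCL P
  | neg : PCL P → PCL P
  | union : PCL P → PCL P → PCL P
  | coal : PCL P → PCL P → PCL P

/-- Satisfaction of a PCL formula by a configuration (a finite set of interactions). -/
def PCLsat {P : Type} [DecidableEq P] : Finset (Finset P) → PCL P → Prop
  | _, .tt => True
  | γ, .pil φ => ∀ a ∈ γ, PILsat a φ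
  | γ, .neg f => ¬ PCLsat γ f
  | γ, .union f g => PCLsat γ f ∨ PCLsat γ g
  | γ, .coal f g => ∃ γ₁ γ₂ : Finset (Finset P),
      γ₁.Nonempty ∧ γ₂.Nonempty ∧ γ₁ ∪ γ₂ = γ ∧ PCLsat γ₁ f ∧ PCLsat γ₂ g

/-- Syntax of weighted PCL over ports `P` and a pv-monoid with carrier `D`. -/
inductive WPCL (P D : Type) where
  | const : D → WPCL P D
  | pcl : PCL P → WPCL P D
  | oplus : WPCL P D → WPCL P D → WPCL P D
  | otimes : WPCL P D → WPCL P D → WPCL P D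
  | coal : WPCL P D → WPCL P D → WPCL P D
  | star : WPCL P D → WPCL P D

open scoped Classical in
/-- Semantics of weighted PCL formulas.  The pv-monoid is given by an additive
commutative monoid `D` (the `⊕` operation and `0`), a multiplication `ot` (`⊗`),
a unit `one` and a symmetric valuation function `val` on nonempty multisets. -/
noncomputable def sem {P D : Type} [DecidableEq P] [AddCommMonoid D]
    (ot : D → D → D) (one : D) (val : Multiset D → D) :
    WPCL P D → Finset (Finset P) → D
  | .const d, _ => d
  | .pcl f, γ => if PCLsat γ f then one else 0
  | .oplus ζ₁ ζ₂, γ => sem ot one val ζ₁ γ + sem ot one val ζ₂ γ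
  | .otimes ζ₁ ζ₂, γ => ot (sem ot one val ζ₁ γ) (sem ot one val ζ₂ γ)
  | .coal ζ₁ ζ₂, γ =>
      ∑ p ∈ (γ.powerset ×ˢ γ.powerset).filter
        (fun p => p.1.Nonempty ∧ p.2.Nonempty ∧ Disjoint p.1 p.2 ∧ p.1 ∪ p.2 = γ),
        ot (sem ot one val ζ₁ p.1) (sem ot one val ζ₂ p.2)
  | .star ζ, γ =>
      ∑ Q ∈ γ.powerset.powerset.filter
        (fun Q => Q.Nonempty ∧ (∀ x ∈ Q, x.Nonempty) ∧
          (∀ x ∈ Q, ∀ y ∈ Q, x ≠ y → Disjoint x y) ∧ Q.sup id = γ),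
        val (Q.val.map (fun x => sem ot one val ζ x))

/-- `γ` is a configuration: a nonempty set of (nonempty) interactions. -/
def Config {P : Type} (γ : Finset (Finset P)) : Prop :=
  γ.Nonempty ∧ ∀ a ∈ γ, a.Nonempty

/-- The axioms of an (idempotent) product valuation monoid, on top of the
additive commutative monoid structure `(D, +, 0)`. -/
structure IsPVM (D : Type) [AddCommMonoid D]
    (ot : D → D → D) (one : D) (val : Multiset D → D) : Prop where
  zero_ot : ∀ d, ot 0 d = 0
  ot_zero : ∀ d, ot d 0 = 0
  one_ot : ∀ d, ot one d = d
  ot_one : ∀ d, ot d one = d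
  val_singleton : ∀ d, val {d} = d
  val_zero : ∀ m : Multiset D, (0 : D) ∈ m → val m = 0
  val_one : ∀ n : ℕ, 1 ≤ n → val (Multiset.replicate n one) = one
  idem : ∀ d : D, d + d = d

/-- The wclosure `∼ζ := ζ ⊕ (ζ ⊎ 1)` of a weighted PCL formula. -/
def wclosure {P D : Type} (one : D) (ζ : WPCL P D) : WPCL P D :=
  ζ.oplus (ζ.coal (.const one))


lemma ot_sum_r {D : Type} [AddCommMonoid D] (ot : D → D → D) (h0 : ∀ d, ot 0 d = 0)
    (hrd : ∀ a b c : D, ot (a + b) c = ot a c + ot b c)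
    {ι : Type*} (s : Finset ι) (f : ι → D) (c : D) :
    ot (∑ i ∈ s, f i) c = ∑ i ∈ s, ot (f i) c := by
  classical
  induction s using Finset.induction_on with
  | empty => simp [h0]
  | insert _ _ h ih => simp [Finset.sum_insert h, hrd, ih]

lemma ot_sum_l {D : Type} [AddCommMonoid D] (ot : D → D → D) (h0 : ∀ d, ot d 0 = 0)
    (hld : ∀ a b c : D, ot a (b + c) = ot a b + ot a c)
    {ι : Type*} (s : Finset ι) (f : ι → D) (c : D) :
    ot c (∑ i ∈ s, f i) = ∑ i ∈ s, ot c (f i) := by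
  classical
  induction s using Finset.induction_on with
  | empty => simp [h0]
  | insert _ _ h ih => simp [Finset.sum_insert h, hld, ih]

open scoped Classical in
lemma coal_assoc_key {P D : Type} [DecidableEq P] [AddCommMonoid D]
    (ot : D → D → D) (h0l : ∀ d, ot 0 d = 0) (h0r : ∀ d, ot d 0 = 0)
    (hassoc : ∀ a b c : D, ot (ot a b) c = ot a (ot b c))
    (hld : ∀ a b c : D, ot a (b + c) = ot a b + ot a c)
    (hrd : ∀ a b c : D, ot (a + b) c = ot a c + ot b c)
    (f g h : Finset (Finset P) → D) (γ : Finset (Finset P)) :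
    ∑ p ∈ (γ.powerset ×ˢ γ.powerset).filter
        (fun p => p.1.Nonempty ∧ p.2.Nonempty ∧ Disjoint p.1 p.2 ∧ p.1 ∪ p.2 = γ),
      ot (∑ q ∈ (p.1.powerset ×ˢ p.1.powerset).filter
        (fun q => q.1.Nonempty ∧ q.2.Nonempty ∧ Disjoint q.1 q.2 ∧ q.1 ∪ q.2 = p.1),
          ot (f q.1) (g q.2)) (h p.2)
    = ∑ p ∈ (γ.powerset ×ˢ γ.powerset).filter
        (fun p => p.1.Nonempty ∧ p.2.Nonempty ∧ Disjoint p.1 p.2 ∧ p.1 ∪ p.2 = γ),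
      ot (f p.1) (∑ q ∈ (p.2.powerset ×ˢ p.2.powerset).filter
        (fun q => q.1.Nonempty ∧ q.2.Nonempty ∧ Disjoint q.1 q.2 ∧ q.1 ∪ q.2 = p.2),
          ot (g q.1) (h q.2)) := by
  classical
  set S : Finset (Finset P) → Finset (Finset (Finset P) × Finset (Finset P)) :=
    fun δ => (δ.powerset ×ˢ δ.powerset).filter
        (fun p => p.1.Nonempty ∧ p.2.Nonempty ∧ Disjoint p.1 p.2 ∧ p.1 ∪ p.2 = δ) with hS
  have L : (∑ p ∈ S γ, ot (∑ q ∈ S p.1, ot (f q.1) (g q.2)) (h p.2))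
      = ∑ x ∈ (S γ).sigma (fun p => S p.1), ot (ot (f x.2.1) (g x.2.2)) (h x.1.2) := by
    rw [Finset.sum_sigma]
    exact Finset.sum_congr rfl fun p _ => ot_sum_r ot h0l hrd _ _ _
  have R : (∑ p ∈ S γ, ot (f p.1) (∑ q ∈ S p.2, ot (g q.1) (h q.2)))
      = ∑ x ∈ (S γ).sigma (fun p => S p.2), ot (f x.1.1) (ot (g x.2.1) (h x.2.2)) := by
    rw [Finset.sum_sigma]
    exact Finset.sum_congr rfl fun p _ => ot_sum_l ot h0r hld _ _ _
  rw [L, R]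
  refine Finset.sum_nbij'
    (fun x => ⟨(x.2.1, x.2.2 ∪ x.1.2), (x.2.2, x.1.2)⟩)
    (fun x => ⟨(x.1.1 ∪ x.2.1, x.2.2), (x.1.1, x.2.1)⟩)
    ?_ ?_ ?_ ?_ ?_
  · intro a ha
    simp only [hS, Finset.mem_sigma, Finset.mem_filter, Finset.mem_product,
      Finset.mem_powerset] at ha ⊢
    obtain ⟨⟨⟨hA, hB⟩, hAne, hBne, hAB, hABγ⟩, ⟨⟨hC, hE⟩, hCne, hEne, hCE, hCEA⟩⟩ := ha
    refine ⟨⟨⟨hC.trans hA, Finset.union_subset (hE.trans hA) hB⟩, hCne,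
      hEne.mono Finset.subset_union_left,
      Finset.disjoint_union_right.2 ⟨hCE, Finset.disjoint_of_subset_left hC hAB⟩,
      by rw [← Finset.union_assoc, hCEA, hABγ]⟩,
      ⟨Finset.subset_union_left, Finset.subset_union_right⟩, hEne, hBne,
      Finset.disjoint_of_subset_left hE hAB, trivial⟩
  · intro a ha
    simp only [hS, Finset.mem_sigma, Finset.mem_filter, Finset.mem_product,
      Finset.mem_powerset] at ha ⊢
    obtain ⟨⟨⟨hA, hB⟩, hAne, hBne, hAB, hABγ⟩, ⟨⟨hC, hE⟩, hCne, hEne, hCE, hCEB⟩⟩ := ha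
    refine ⟨⟨⟨Finset.union_subset hA (hC.trans hB), hE.trans hB⟩,
      hAne.mono Finset.subset_union_left, hEne,
      Finset.disjoint_union_left.2 ⟨Finset.disjoint_of_subset_right hE hAB,
        hCE⟩,
      by rw [Finset.union_assoc, hCEB, hABγ]⟩,
      ⟨Finset.subset_union_left, Finset.subset_union_right⟩, hAne, hCne,
      Finset.disjoint_of_subset_right hC hAB, trivial⟩
  · rintro ⟨⟨A, B⟩, C, E⟩ ha
    simp only [hS, Finset.mem_sigma, Finset.mem_filter, Finset.mem_product,
      Finset.mem_powerset] at ha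
    obtain ⟨⟨_, _, _, _, _⟩, ⟨_, _, _, _, hCEA⟩⟩ := ha
    simp only [hCEA]
  · rintro ⟨⟨A, B⟩, C, E⟩ ha
    simp only [hS, Finset.mem_sigma, Finset.mem_filter, Finset.mem_product,
      Finset.mem_powerset] at ha
    obtain ⟨⟨_, _, _, _, _⟩, ⟨_, _, _, _, hCEB⟩⟩ := ha
    simp only [hCEB]
  · exact fun a _ => hassoc _ _ _

theorem stmt10 {P D : Type} [DecidableEq P] [AddCommMonoid D]
    (ot : D → D → D) (one : D) (val : Multiset D → D)
    (hpvm : IsPVM D ot one val)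
    (hassoc : ∀ a b c : D, ot (ot a b) c = ot a (ot b c))
    (hld : ∀ a b c : D, ot a (b + c) = ot a b + ot a c)
    (hrd : ∀ a b c : D, ot (a + b) c = ot a c + ot b c)
    (ζ₁ ζ₂ ζ₃ : WPCL P D) (γ : Finset (Finset P)) (hγ : Config γ) :
    sem ot one val ((ζ₁.coal ζ₂).coal ζ₃) γ
      = sem ot one val (ζ₁.coal (ζ₂.coal ζ₃)) γ := by
  classical
  simp only [sem]
  exact coal_assoc_key ot hpvm.zero_ot hpvm.ot_zero hassoc hld hrd _ _ _ γ
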